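/- Let $\zeta = e^{2\pi i/3}$ and let $S_3$ be the $6\times 6$ matrix $\begin{pmatrix}\zeta&0&0&0&0&0\\0&\zeta^{-1}&0&0&0&0\\0&0&-\zeta^{-1}/2&0&0&-(1-\zeta)/2\\0&0&0&\zeta&0&0\\0&0&0&0&\zeta&0\\0&0&-(1-\zeta)/2&0&0&-\zeta^{-1}/2\end{pmatrix}$ and $W_{27} = \mathrm{diag}(-1,-1,1,1,-1,-1)$. Then the matrix $\tau_3 = S_3 W_{27} S_3 W_{27}$ is diagonal with each diagonal entry equal to $\zeta$ or $\zeta^{-1}$, and $\tau_3^3 = I$. -/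

import Mathlib

open Matrix

namespace Stmt8

/-- `ζ = e^{2πi/3}`. -/
noncomputable def ζ : ℂ := Complex.exp (2 * Real.pi * Complex.I / 3)

/-- The action of `S₃` on the CM subspace `W` of weight-2 cusp forms,
w.r.t. the basis `e₅, …, e₁₀`. -/
noncomputable def S3 : Matrix (Fin 6) (Fin 6) ℂ :=
  !![ζ, 0, 0, 0, 0, 0;
     0, ζ⁻¹, 0, 0, 0, 0;
     0, 0, -ζ⁻¹/2, 0, 0, -(1-ζ)/2;
     0, 0, 0, ζ, 0, 0;
     0, 0, 0, 0, ζ, 0;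
     0, 0, -(1-ζ)/2, 0, 0, -ζ⁻¹/2]

/-- The action of `w₂₇` on `W`. -/
noncomputable def W27 : Matrix (Fin 6) (Fin 6) ℂ :=
  !![-1,0,0,0,0,0; 0,-1,0,0,0,0; 0,0,1,0,0,0; 0,0,0,1,0,0; 0,0,0,0,-1,0; 0,0,0,0,0,-1]

/-- `τ₃ = S₃ W₂₇ S₃ W₂₇`. -/
noncomputable def τ3 : Matrix (Fin 6) (Fin 6) ℂ := S3 * W27 * S3 * W27

section Aux
variable {α : Type*} (a b c d e f : α)
lemma vec6_0 : ![a,b,c,d,e,f] 0 = a := rfl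
lemma vec6_1 : ![a,b,c,d,e,f] 1 = b := rfl
lemma vec6_2 : ![a,b,c,d,e,f] 2 = c := rfl
lemma vec6_3 : ![a,b,c,d,e,f] 3 = d := rfl
lemma vec6_4 : ![a,b,c,d,e,f] 4 = e := rfl
lemma vec6_5 : ![a,b,c,d,e,f] 5 = f := rfl
variable {h : 0 < 6}
lemma vec6m_0 (h : (0:ℕ) < 6) : ![a,b,c,d,e,f] ⟨0,h⟩ = a := rfl
lemma vec6m_1 (h : (1:ℕ) < 6) : ![a,b,c,d,e,f] ⟨1,h⟩ = b := rfl
lemma vec6m_2 (h : (2:ℕ) < 6) : ![a,b,c,d,e,f] ⟨2,h⟩ = c := rfl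
lemma vec6m_3 (h : (3:ℕ) < 6) : ![a,b,c,d,e,f] ⟨3,h⟩ = d := rfl
lemma vec6m_4 (h : (4:ℕ) < 6) : ![a,b,c,d,e,f] ⟨4,h⟩ = e := rfl
lemma vec6m_5 (h : (5:ℕ) < 6) : ![a,b,c,d,e,f] ⟨5,h⟩ = f := rfl
end Aux

lemma hprim : IsPrimitiveRoot ζ 3 := by
  have := Complex.isPrimitiveRoot_exp 3 (by norm_num)
  simpa [ζ] using this

lemma hζ3 : ζ ^ 3 = 1 := hprim.pow_eq_one

lemma hinv : ζ⁻¹ = ζ ^ 2 :=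
  inv_eq_of_mul_eq_one_right (by linear_combination hζ3)

lemma hquad : ζ ^ 2 + ζ + 1 = 0 := by
  have h1 : ζ ≠ 1 := hprim.ne_one (by norm_num)
  have h : (ζ - 1) * (ζ ^ 2 + ζ + 1) = 0 := by linear_combination hζ3
  rcases mul_eq_zero.mp h with h | h
  · exact absurd (sub_eq_zero.mp h) h1
  · exact h

set_option maxHeartbeats 1000000 in
lemma SW_eq : S3 * W27 =
    !![-ζ,0,0,0,0,0; 0,-ζ⁻¹,0,0,0,0; 0,0,-ζ⁻¹/2,0,0,(1-ζ)/2;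
       0,0,0,ζ,0,0; 0,0,0,0,-ζ,0; 0,0,-(1-ζ)/2,0,0,ζ⁻¹/2] := by
  ext i j
  fin_cases i <;> fin_cases j <;>
    simp only [S3, W27, Matrix.mul_apply, Fin.sum_univ_six, Matrix.of_apply,
      vec6_0, vec6_1, vec6_2, vec6_3, vec6_4, vec6_5, vec6m_0, vec6m_1, vec6m_2, vec6m_3, vec6m_4, vec6m_5, Fin.isValue] <;>
    ring

set_option maxHeartbeats 1000000 in
lemma τ3_eq : τ3 = Matrix.diagonal ![ζ^2, ζ, ζ, ζ^2, ζ^2, ζ] := by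
  have h : τ3 = (S3 * W27) * (S3 * W27) := by
    simp only [τ3, Matrix.mul_assoc]
  rw [h, SW_eq]
  ext i j
  fin_cases i <;> fin_cases j <;>
    simp only [Matrix.mul_apply, Fin.sum_univ_six, Matrix.of_apply,
      vec6_0, vec6_1, vec6_2, vec6_3, vec6_4, vec6_5, vec6m_0, vec6m_1, vec6m_2, vec6m_3, vec6m_4, vec6m_5, Fin.isValue,
      Matrix.diagonal_apply, hinv] <;>
    (try norm_num [Fin.ext_iff]) <;>
    first
      | ring1
      | linear_combination ζ * hζ3
      | linear_combination (ζ/4) * hζ3 - (1/4) * hquad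

/-- `τ₃` is diagonal with each diagonal entry equal to `ζ` or `ζ⁻¹`, and `τ₃³ = I`. -/
theorem tau3_diagonal_and_order_three :
    (∀ i j : Fin 6, i ≠ j → τ3 i j = 0) ∧
    (∀ i : Fin 6, τ3 i i = ζ ∨ τ3 i i = ζ⁻¹) ∧
    τ3 ^ 3 = 1 := by
  refine ⟨?_, ?_, ?_⟩
  · intro i j h
    rw [τ3_eq]
    exact Matrix.diagonal_apply_ne _ h
  · intro i
    rw [τ3_eq, Matrix.diagonal_apply_eq]
    fin_cases i <;>
      simp only [vec6_0, vec6_1, vec6_2, vec6_3, vec6_4, vec6_5, hinv, Fin.isValue]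
    all_goals first | (left; rfl) | (right; rfl)
  · have hv : (![ζ^2, ζ, ζ, ζ^2, ζ^2, ζ]) ^ 3 = 1 := by
      funext i
      fin_cases i <;>
        simp only [Pi.pow_apply, Pi.one_apply,
          vec6_0, vec6_1, vec6_2, vec6_3, vec6_4, vec6_5, vec6m_0, vec6m_1, vec6m_2, vec6m_3, vec6m_4, vec6m_5, Fin.isValue] <;>
        first
          | linear_combination hζ3
          | linear_combination (ζ^3 + 1) * hζ3
    rw [τ3_eq, Matrix.diagonal_pow, hv]
    exact Matrix.diagonal_one
end Stmt8
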